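/- Let q = p^n be a prime power, let H = (a_{i−j}) be a circulant q-Butson Hadamard matrix of dimension d = p^{m+n}, let ζ ∈ ℂ be a primitive d-th root of unity, and set α_0 = Σ_{j < d} a_j and α_1 = Σ_{j < d} a_j ζ^j. Then there exist a sign ε ∈ {+1, −1} and an integer r ≥ 0 such that α_0 = ε·ζ^r·α_1; in particular α_0/α_1 is a root of unity. -/

import Mathlib

open Finset Polynomial

lemma pow_mod_eq' {M : Type*} [Monoid M] {z : M} {d : ℕ} (h : z ^ d = 1) (N : ℕ) :
    z ^ (N % d) = z ^ N := by
  conv_rhs => rw [← Nat.div_add_mod N d]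
  rw [pow_add, pow_mul, h, one_pow, one_mul]

lemma assoc_pow_of_mul_eq {R : Type*} [CommMonoidWithZero R] [IsCancelMulZero R] {π : R} (hπ : Prime π) :
    ∀ (N : ℕ) (x y : R) (u : Rˣ), x * y = π ^ N * u → ∃ a, Associated (π ^ a) x := by
  intro N
  induction N with
  | zero =>
    intro x y u h
    rw [pow_zero, one_mul] at h
    exact ⟨0, by
      rw [pow_zero]
      exact (associated_one_iff_isUnit.2 (isUnit_of_mul_isUnit_left (h ▸ u.isUnit))).symm⟩
  | succ N ih =>
    intro x y u h
    have hsucc : π ^ (N + 1) * (u : R) = π * (π ^ N * u) := by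
      rw [pow_succ, mul_comm (π ^ N) π, mul_assoc]
    have hdvd : π ∣ x * y := by
      rw [h, hsucc]
      exact ⟨π ^ N * u, rfl⟩
    rcases hπ.dvd_or_dvd hdvd with ⟨x', rfl⟩ | ⟨y', rfl⟩
    · have h' : x' * y = π ^ N * u := by
        apply mul_left_cancel₀ hπ.ne_zero
        rw [← mul_assoc, h, hsucc]
      obtain ⟨a, ha⟩ := ih x' y u h'
      exact ⟨a + 1, by rw [pow_succ, mul_comm (π ^ a) π]; exact ha.mul_left π⟩
    · have h' : x * y' = π ^ N * u := by
        apply mul_left_cancel₀ hπ.ne_zero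
        rw [← mul_left_comm x π y', h, hsucc]
      exact ih x y' u h'

lemma assoc_prod_pow {ι : Type*} {O : Type*} [CommMonoid O] (s : Finset ι) (f : ι → O) (x : O)
    (h : ∀ i ∈ s, Associated x (f i)) : Associated (x ^ s.card) (∏ i ∈ s, f i) := by
  induction s using Finset.cons_induction with
  | empty => simp
  | cons i s hi ih =>
    rw [Finset.prod_cons, Finset.card_cons, pow_succ, mul_comm (x ^ s.card) x]
    exact (h i (Finset.mem_cons_self i s)).mul_mul
      (ih fun j hj => h j (Finset.mem_cons_of_mem hj))

lemma prim_sub_one_assoc {R : Type*} [CommRing R] [IsDomain R] {d : ℕ} (hd : 1 < d) {ω μ : R}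
    (hω : IsPrimitiveRoot ω d) (hμ : IsPrimitiveRoot μ d) : Associated (ω - 1) (μ - 1) := by
  haveI : NeZero d := ⟨by omega⟩
  obtain ⟨i, hilt, hi⟩ := hω.eq_pow_of_pow_eq_one hμ.pow_eq_one
  subst hi
  have hcop : i.Coprime d := (hω.pow_iff_coprime (by omega) i).1 hμ
  have h1 : (ω - 1) ∣ ω ^ i - 1 := Dvd.intro_left _ (geom_sum_mul ω i)
  obtain ⟨j, -, hj⟩ := Nat.exists_mul_mod_eq_one_of_coprime hcop hd
  have hωij : (ω ^ i) ^ j = ω := by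
    rw [← pow_mul, ← pow_mod_eq' hω.pow_eq_one (i * j), hj, pow_one]
  have h2 : (ω ^ i - 1) ∣ ω - 1 := by
    have := Dvd.intro_left _ (geom_sum_mul (ω ^ i) j)
    rwa [hωij] at this
  exact associated_of_dvd_dvd h1 h2

lemma conj_sum_pow {ι : Type*} [Fintype ι] {d : ℕ} (hd : d ≠ 0) {z : ℂ} (hz : z ^ d = 1)
    (g : ι → ℕ) :
    (starRingEnd ℂ) (∑ i : ι, z ^ g i) = ∑ i : ι, z ^ ((d - 1) * g i) := by
  rw [map_sum]
  refine Finset.sum_congr rfl fun i _ => ?_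
  have hnorm : ‖z ^ g i‖ = 1 := by
    rw [norm_pow, Complex.norm_eq_one_of_pow_eq_one hz hd, one_pow]
  rw [← Complex.inv_eq_conj hnorm]
  have hmul : z ^ ((d - 1) * g i) * z ^ g i = 1 := by
    rw [← pow_add]
    have hg : g i ≤ d * g i := Nat.le_mul_of_pos_left _ (Nat.pos_of_ne_zero hd)
    rw [Nat.sub_one_mul, Nat.sub_add_cancel hg, pow_mul, hz, one_pow]
  exact (eq_inv_of_mul_eq_one_left hmul).symm

lemma corr_sum {d : ℕ} [NeZero d] (a : ZMod d → ℂ) (χ : ZMod d → ℂ)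
    (hcorr : ∀ u : ZMod d, ∑ t : ZMod d, a (u + t) * (starRingEnd ℂ) (a t)
      = if u = 0 then (d : ℂ) else 0)
    (hχ0 : χ 0 = 1)
    (hχadd : ∀ u v, χ (u + v) = χ u * χ v)
    (hχ1 : ∀ u, χ u * (starRingEnd ℂ) (χ u) = 1) :
    (∑ t : ZMod d, a t * χ t) * (starRingEnd ℂ) (∑ t : ZMod d, a t * χ t) = d := by
  rw [map_sum, Finset.sum_mul_sum, Finset.sum_comm]
  have hstep : ∀ u : ZMod d, ∑ t : ZMod d, (a t * χ t) * (starRingEnd ℂ) (a u * χ u)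
      = ∑ v : ZMod d, χ v * (a (u + v) * (starRingEnd ℂ) (a u)) := by
    intro u
    rw [← Equiv.sum_comp (Equiv.addLeft u)
      (fun t => (a t * χ t) * (starRingEnd ℂ) (a u * χ u))]
    refine Finset.sum_congr rfl fun v _ => ?_
    simp only [Equiv.coe_addLeft]
    rw [hχadd u v, map_mul]
    calc a (u + v) * (χ u * χ v) * ((starRingEnd ℂ) (a u) * (starRingEnd ℂ) (χ u))
        = (χ u * (starRingEnd ℂ) (χ u)) * (χ v * (a (u + v) * (starRingEnd ℂ) (a u))) := by ring
      _ = χ v * (a (u + v) * (starRingEnd ℂ) (a u)) := by rw [hχ1 u, one_mul]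
  rw [Finset.sum_congr rfl fun u _ => hstep u, Finset.sum_comm]
  have hstep2 : ∀ v : ZMod d, ∑ u : ZMod d, χ v * (a (u + v) * (starRingEnd ℂ) (a u))
      = χ v * (if v = 0 then (d : ℂ) else 0) := by
    intro v
    rw [← Finset.mul_sum]
    congr 1
    rw [← hcorr v]
    exact Finset.sum_congr rfl fun u _ => by rw [add_comm]
  rw [Finset.sum_congr rfl fun v _ => hstep2 v]
  rw [Finset.sum_eq_single 0]
  · rw [hχ0, one_mul, if_pos rfl]
  · intro v _ hv
    rw [if_neg hv, mul_zero]
  · intro h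
    exact absurd (Finset.mem_univ 0) h

open NumberField in
theorem key_main (p : ℕ+) (k0 : ℕ) [hpf : Fact (p : ℕ).Prime] (K : Type*) [Field K] [CharZero K]
    [IsCyclotomicExtension {(p : ℕ) ^ (k0 + 1)} ℚ K]
    (d : ℕ) [NeZero d] (hd_def : d = (p : ℕ) ^ (k0 + 1))
    {ζ : ℂ} (hζ : IsPrimitiveRoot ζ d)
    (g₀ g₁ : ZMod d → ℕ)
    (h₀ : (∑ t : ZMod d, ζ ^ g₀ t) *
      (starRingEnd ℂ) (∑ t : ZMod d, ζ ^ g₀ t) = (d : ℂ))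
    (h₁ : (∑ t : ZMod d, ζ ^ g₁ t) *
      (starRingEnd ℂ) (∑ t : ZMod d, ζ ^ g₁ t) = (d : ℂ)) :
    (∃ ε : ℂ, (ε = 1 ∨ ε = -1) ∧ ∃ r : ℕ,
        (∑ t : ZMod d, ζ ^ g₀ t) =
          ε * ζ ^ r * ∑ t : ZMod d, ζ ^ g₁ t) ∧
      ∃ k : ℕ, 0 < k ∧
        ((∑ t : ZMod d, ζ ^ g₀ t) /
          ∑ t : ZMod d, ζ ^ g₁ t) ^ k = 1 := by
  have hp : (p : ℕ).Prime := hpf.out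
  have hdpos : 0 < d := Nat.pos_of_ne_zero (NeZero.ne d)
  have hd1 : 1 < d := by
    rw [hd_def]; exact Nat.one_lt_pow (Nat.succ_ne_zero k0) hp.one_lt
  have hn : ((p : ℕ) ^ (k0 + 1)) = d := by
    rw [hd_def]
  haveI : NeZero ((p : ℕ) ^ (k0 + 1)) := hn ▸ inferInstance
  haveI : NumberField K := IsCyclotomicExtension.numberField {(p : ℕ) ^ (k0 + 1)} ℚ K
  set ζK : K := IsCyclotomicExtension.zeta ((p : ℕ) ^ (k0 + 1)) ℚ K with hζK_def
  have hζK : IsPrimitiveRoot ζK ((p : ℕ) ^ (k0 + 1)) :=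
    IsCyclotomicExtension.zeta_spec ((p : ℕ) ^ (k0 + 1)) ℚ K
  have hζKd : IsPrimitiveRoot ζK d := hn ▸ hζK
  have hirr : Irreducible (Polynomial.cyclotomic ((p : ℕ) ^ (k0 + 1)) ℚ) :=
    Polynomial.cyclotomic.irreducible_rat (by positivity)
  -- the embedding sending ζK to ζ
  have hζmem : ζ ∈ primitiveRoots ((p : ℕ) ^ (k0 + 1)) ℂ :=
    (mem_primitiveRoots (by rw [hn]; exact hdpos)).2 (hn ▸ hζ)
  set f : K →ₐ[ℚ] ℂ :=
    (hζK.embeddingsEquivPrimitiveRoots ℂ hirr).symm ⟨ζ, hζmem⟩ with hf_def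
  have hfζ : f ζK = ζ := by
    have h1 := hζK.embeddingsEquivPrimitiveRoots_apply_coe ℂ hirr
      ((hζK.embeddingsEquivPrimitiveRoots ℂ hirr).symm ⟨ζ, hζmem⟩)
    rw [Equiv.apply_symm_apply] at h1
    exact h1.symm
  have hfinj : Function.Injective f := f.toRingHom.injective
  -- sums in K
  set A₀ : K := ∑ t : ZMod d, ζK ^ g₀ t with hA₀_def
  set A₁ : K := ∑ t : ZMod d, ζK ^ g₁ t with hA₁_def
  set B₀ : K := ∑ t : ZMod d, ζK ^ ((d - 1) * g₀ t) with hB₀_def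
  set B₁ : K := ∑ t : ZMod d, ζK ^ ((d - 1) * g₁ t) with hB₁_def
  have hfA₀ : f A₀ = ∑ t : ZMod d, ζ ^ g₀ t := by
    rw [hA₀_def, map_sum]
    exact Finset.sum_congr rfl fun t _ => by rw [map_pow, hfζ]
  have hfA₁ : f A₁ = ∑ t : ZMod d, ζ ^ g₁ t := by
    rw [hA₁_def, map_sum]
    exact Finset.sum_congr rfl fun t _ => by rw [map_pow, hfζ]
  have hfB₀ : f B₀ = ∑ t : ZMod d, ζ ^ ((d - 1) * g₀ t) := by
    rw [hB₀_def, map_sum]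
    exact Finset.sum_congr rfl fun t _ => by rw [map_pow, hfζ]
  have hfB₁ : f B₁ = ∑ t : ZMod d, ζ ^ ((d - 1) * g₁ t) := by
    rw [hB₁_def, map_sum]
    exact Finset.sum_congr rfl fun t _ => by rw [map_pow, hfζ]
  have hζd : ζ ^ d = 1 := hζ.pow_eq_one
  have hζKpow : ζK ^ d = 1 := hζKd.pow_eq_one
  have hAB₀ : A₀ * B₀ = (d : K) := by
    apply hfinj
    rw [map_mul, hfA₀, hfB₀, map_natCast, ← conj_sum_pow hdpos.ne' hζd g₀]
    exact h₀
  have hAB₁ : A₁ * B₁ = (d : K) := by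
    apply hfinj
    rw [map_mul, hfA₁, hfB₁, map_natCast, ← conj_sum_pow hdpos.ne' hζd g₁]
    exact h₁
  have hdK : (d : K) ≠ 0 := Nat.cast_ne_zero.2 hdpos.ne'
  have hA₀ne : A₀ ≠ 0 := fun h => hdK (by rw [← hAB₀, h, zero_mul])
  have hA₁ne : A₁ ≠ 0 := fun h => hdK (by rw [← hAB₁, h, zero_mul])
  -- all embeddings have norm sqrt d on A₀, A₁
  have hnormmul : ∀ (φ : K →+* ℂ) (g : ZMod d → ℕ) (A B : K),
      A = ∑ t : ZMod d, ζK ^ g t → B = ∑ t : ZMod d, ζK ^ ((d - 1) * g t) →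
      A * B = (d : K) → φ A * (starRingEnd ℂ) (φ A) = (d : ℂ) := by
    intro φ g A B hA hB hABeq
    have hzd : (φ ζK) ^ d = 1 := by rw [← map_pow, hζKpow, map_one]
    have h1 : φ A = ∑ t : ZMod d, (φ ζK) ^ g t := by
      rw [hA, map_sum]
      exact Finset.sum_congr rfl fun t _ => by rw [map_pow]
    have h2 : φ B = ∑ t : ZMod d, (φ ζK) ^ ((d - 1) * g t) := by
      rw [hB, map_sum]
      exact Finset.sum_congr rfl fun t _ => by rw [map_pow]
    rw [h1, conj_sum_pow hdpos.ne' hzd g, ← h1, ← h2, ← map_mul, hABeq, map_natCast]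
  have hφnorm : ∀ φ : K →+* ℂ, ‖φ (A₀ / A₁)‖ = 1 := by
    intro φ
    have e0 := hnormmul φ g₀ A₀ B₀ hA₀_def hB₀_def hAB₀
    have e1 := hnormmul φ g₁ A₁ B₁ hA₁_def hB₁_def hAB₁
    have n0 : Complex.normSq (φ A₀) = (d : ℝ) := by
      have := Complex.mul_conj (φ A₀)
      rw [e0] at this
      exact_mod_cast this.symm
    have n1 : Complex.normSq (φ A₁) = (d : ℝ) := by
      have := Complex.mul_conj (φ A₁)
      rw [e1] at this
      exact_mod_cast this.symm
    rw [map_div₀, norm_div, Complex.norm_def, Complex.norm_def, n0, n1]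
    exact div_self (Real.sqrt_ne_zero'.2 (by exact_mod_cast hdpos))
  -- ring of integers
  have hζKint : IsIntegral ℤ ζK := hζK.isIntegral (by positivity)
  set ω : 𝓞 K := hζK.toInteger with hω_def
  have hωcoe : algebraMap (𝓞 K) K ω = ζK := rfl
  have hωprim : IsPrimitiveRoot ω ((p : ℕ) ^ (k0 + 1)) := hζK.toInteger_isPrimitiveRoot
  have hωd : IsPrimitiveRoot ω d := hn ▸ hωprim
  set π : 𝓞 K := ω - 1 with hπ_def
  have hπ : Prime π := hζK.zeta_sub_one_prime
  -- p is associated to a power of π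
  have hp_assoc : Associated ((p : ℕ) : 𝓞 K) (π ^ (primitiveRoots d (𝓞 K)).card) := by
    have hcyc : (((p : ℕ) : 𝓞 K)) = ∏ μ ∈ primitiveRoots d (𝓞 K), (1 - μ) := by
      have h1 := Polynomial.eval_one_cyclotomic_prime_pow (R := 𝓞 K) (p := (p : ℕ)) k0
      rw [← hd_def, Polynomial.cyclotomic_eq_prod_X_sub_primitiveRoots hωd] at h1
      rw [← h1, Polynomial.eval_prod]
      exact Finset.prod_congr rfl fun μ _ => by
        rw [Polynomial.eval_sub, Polynomial.eval_X, Polynomial.eval_C]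
    rw [hcyc]
    refine (assoc_prod_pow _ _ _ fun μ hμ => ?_).symm
    have hμ' : IsPrimitiveRoot μ d := (mem_primitiveRoots hdpos).1 hμ
    have h2 : Associated (ω - 1) (μ - 1) := prim_sub_one_assoc hd1 hωd hμ'
    have h3 : (1 : 𝓞 K) - μ = -(μ - 1) := by ring
    rw [h3]
    exact h2.trans ⟨-1, by simp⟩
  obtain ⟨u, hu⟩ := hp_assoc
  set T : ℕ := (primitiveRoots d (𝓞 K)).card
  -- integer versions of the sums
  set α₀ : 𝓞 K := ∑ t : ZMod d, ω ^ g₀ t with hα₀_def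
  set α₁ : 𝓞 K := ∑ t : ZMod d, ω ^ g₁ t with hα₁_def
  set β₀ : 𝓞 K := ∑ t : ZMod d, ω ^ ((d - 1) * g₀ t) with hβ₀_def
  set β₁ : 𝓞 K := ∑ t : ZMod d, ω ^ ((d - 1) * g₁ t) with hβ₁_def
  have hOinj : Function.Injective (algebraMap (𝓞 K) K) := IsFractionRing.injective _ _
  have hmapα₀ : algebraMap (𝓞 K) K α₀ = A₀ := by
    rw [hα₀_def, map_sum, hA₀_def]
    exact Finset.sum_congr rfl fun t _ => by rw [map_pow, hωcoe]
  have hmapα₁ : algebraMap (𝓞 K) K α₁ = A₁ := by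
    rw [hα₁_def, map_sum, hA₁_def]
    exact Finset.sum_congr rfl fun t _ => by rw [map_pow, hωcoe]
  have hmapβ₀ : algebraMap (𝓞 K) K β₀ = B₀ := by
    rw [hβ₀_def, map_sum, hB₀_def]
    exact Finset.sum_congr rfl fun t _ => by rw [map_pow, hωcoe]
  have hmapβ₁ : algebraMap (𝓞 K) K β₁ = B₁ := by
    rw [hβ₁_def, map_sum, hB₁_def]
    exact Finset.sum_congr rfl fun t _ => by rw [map_pow, hωcoe]
  have hαβ₀ : α₀ * β₀ = ((d : ℕ) : 𝓞 K) := by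
    apply hOinj
    rw [map_mul, hmapα₀, hmapβ₀, map_natCast, hAB₀]
  have hαβ₁ : α₁ * β₁ = ((d : ℕ) : 𝓞 K) := by
    apply hOinj
    rw [map_mul, hmapα₁, hmapβ₁, map_natCast, hAB₁]
  -- decompose α₀ and α₁ as unit times power of π
  have hpπ : ((p : ℕ) : 𝓞 K) = π ^ T * (u⁻¹ : (𝓞 K)ˣ) := by
    rw [← hu, mul_assoc]
    simp
  have hdO : ((d : ℕ) : 𝓞 K) = π ^ (T * (k0 + 1)) * ((u⁻¹ : (𝓞 K)ˣ) ^ (k0 + 1) : (𝓞 K)ˣ) := by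
    rw [hd_def]
    push_cast
    rw [hpπ, mul_pow, ← pow_mul]
  obtain ⟨A, hA⟩ := assoc_pow_of_mul_eq hπ (T * (k0 + 1)) α₀ β₀ _ (by rw [hαβ₀, hdO])
  obtain ⟨B, hB⟩ := assoc_pow_of_mul_eq hπ (T * (k0 + 1)) α₁ β₁ _ (by rw [hαβ₁, hdO])
  obtain ⟨uA, huA⟩ := hA
  obtain ⟨uB, huB⟩ := hB
  -- x = A₀ / A₁ is a root of unity by Kronecker
  have hroot : ∃ k : ℕ, 0 < k ∧ (A₀ / A₁) ^ k = 1 := by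
    rcases le_total B A with hBA | hAB
    · have hxeq : (π ^ (A - B) * (uA : 𝓞 K) * ((uB⁻¹ : (𝓞 K)ˣ) : 𝓞 K)) * α₁ = α₀ := by
        rw [← huA, ← huB]
        have h5 : A - B + B = A := Nat.sub_add_cancel hBA
        calc π ^ (A - B) * (uA : 𝓞 K) * ((uB⁻¹ : (𝓞 K)ˣ) : 𝓞 K) * (π ^ B * (uB : 𝓞 K))
            = (π ^ (A - B) * π ^ B) * (uA : 𝓞 K) *
              (((uB⁻¹ : (𝓞 K)ˣ) : 𝓞 K) * (uB : 𝓞 K)) := by ring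
          _ = π ^ A * (uA : 𝓞 K) := by
              rw [← pow_add, h5, ← Units.val_mul, inv_mul_cancel, Units.val_one, mul_one]
      have hxint : A₀ / A₁ =
          algebraMap (𝓞 K) K (π ^ (A - B) * (uA : 𝓞 K) * ((uB⁻¹ : (𝓞 K)ˣ) : 𝓞 K)) := by
        rw [div_eq_iff hA₁ne, ← hmapα₀, ← hmapα₁, ← map_mul, hxeq]
      have hint : IsIntegral ℤ (A₀ / A₁) := by
        rw [hxint]
        exact RingOfIntegers.isIntegral_coe _
      obtain ⟨k, hk, hxk⟩ := NumberField.Embeddings.pow_eq_one_of_norm_eq_one K ℂ hint hφnorm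
      exact ⟨k, hk, hxk⟩
    · have hxeq : (π ^ (B - A) * (uB : 𝓞 K) * ((uA⁻¹ : (𝓞 K)ˣ) : 𝓞 K)) * α₀ = α₁ := by
        rw [← huA, ← huB]
        have h5 : B - A + A = B := Nat.sub_add_cancel hAB
        calc π ^ (B - A) * (uB : 𝓞 K) * ((uA⁻¹ : (𝓞 K)ˣ) : 𝓞 K) * (π ^ A * (uA : 𝓞 K))
            = (π ^ (B - A) * π ^ A) * (uB : 𝓞 K) *
              (((uA⁻¹ : (𝓞 K)ˣ) : 𝓞 K) * (uA : 𝓞 K)) := by ring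
          _ = π ^ B * (uB : 𝓞 K) := by
              rw [← pow_add, h5, ← Units.val_mul, inv_mul_cancel, Units.val_one, mul_one]
      have hyint : A₁ / A₀ =
          algebraMap (𝓞 K) K (π ^ (B - A) * (uB : 𝓞 K) * ((uA⁻¹ : (𝓞 K)ˣ) : 𝓞 K)) := by
        rw [div_eq_iff hA₀ne, ← hmapα₀, ← hmapα₁, ← map_mul, hxeq]
      have hint : IsIntegral ℤ (A₁ / A₀) := by
        rw [hyint]
        exact RingOfIntegers.isIntegral_coe _
      have hφnorm' : ∀ φ : K →+* ℂ, ‖φ (A₁ / A₀)‖ = 1 := by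
        intro φ
        have h6 : A₁ / A₀ = (A₀ / A₁)⁻¹ := by rw [inv_div]
        rw [h6, map_inv₀, norm_inv, hφnorm φ, inv_one]
      obtain ⟨k, hk, hyk⟩ := NumberField.Embeddings.pow_eq_one_of_norm_eq_one K ℂ hint hφnorm'
      refine ⟨k, hk, ?_⟩

      have h6 : A₁ / A₀ = (A₀ / A₁)⁻¹ := by rw [inv_div]
      rw [h6, inv_pow, inv_eq_one] at hyk
      exact hyk
  obtain ⟨k, hk, hxk⟩ := hroot
  set x : K := A₀ / A₁ with hx_def
  have hx0 : x ≠ 0 := div_ne_zero hA₀ne hA₁ne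
  -- order analysis
  have hxfin : IsOfFinOrder x := isOfFinOrder_iff_pow_eq_one.mpr ⟨k, hk, hxk⟩
  set k₀ : ℕ := orderOf x with hk₀_def
  have hk₀pos : 0 < k₀ := hxfin.orderOf_pos
  have hxprim : IsPrimitiveRoot x k₀ := IsPrimitiveRoot.orderOf x
  obtain ⟨c, b, hk₀eq, hbco⟩ : ∃ c b, (p : ℕ) ^ c * b = k₀ ∧ Nat.Coprime (p : ℕ) b :=
    ⟨k₀.factorization (p : ℕ), k₀ / (p : ℕ) ^ (k₀.factorization (p : ℕ)),
      Nat.ordProj_mul_ordCompl_eq_self k₀ (p : ℕ), Nat.coprime_ordCompl hp hk₀pos.ne'⟩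
  have hbpos : 0 < b := by
    rcases Nat.eq_zero_or_pos b with h | h
    · rw [h, mul_zero] at hk₀eq
      omega
    · exact h
  have hyprim : IsPrimitiveRoot (x ^ (p : ℕ) ^ c) b := hxprim.pow hk₀pos hk₀eq.symm
  have hzprim : IsPrimitiveRoot (x ^ b) ((p : ℕ) ^ c) :=
    hxprim.pow hk₀pos (by rw [← hk₀eq, mul_comm])
  -- totient bound
  have hfinrank : Module.finrank ℚ K = d.totient := by
    rw [IsCyclotomicExtension.finrank K hirr, hn]
  have hbound : ∀ {l : ℕ}, 0 < l → ∀ {w : K}, IsPrimitiveRoot w l →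
      l.totient ≤ d.totient := by
    intro l hl w hw
    have h1 : l.totient ≤ (minpoly ℤ w).natDegree := hw.totient_le_degree_minpoly
    have hint : IsIntegral ℤ w := hw.isIntegral hl
    have h2 : (minpoly ℚ w).natDegree = (minpoly ℤ w).natDegree := by
      rw [minpoly.isIntegrallyClosed_eq_field_fractions' ℚ hint,
        (minpoly.monic hint).natDegree_map]
    calc l.totient ≤ (minpoly ℤ w).natDegree := h1
      _ = (minpoly ℚ w).natDegree := h2.symm
      _ ≤ Module.finrank ℚ K := minpoly.natDegree_le w
      _ = d.totient := hfinrank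
  have hbd_cop : Nat.Coprime b d := by
    rw [hd_def]
    exact Nat.Coprime.pow_right _ hbco.symm
  have hdt : 0 < d.totient := Nat.totient_pos.2 hdpos
  -- b = 1 or 2
  have hb2 : b = 1 ∨ b = 2 := by
    have horder_w : orderOf ((x ^ (p : ℕ) ^ c) * ζK) = b * d := by
      rw [Commute.orderOf_mul_eq_mul_orderOf_of_coprime (Commute.all _ _)]
      · rw [← hyprim.eq_orderOf, ← hζKd.eq_orderOf]
      · rw [← hyprim.eq_orderOf, ← hζKd.eq_orderOf]
        exact hbd_cop
    have hwprim : IsPrimitiveRoot ((x ^ (p : ℕ) ^ c) * ζK) (b * d) :=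
      horder_w ▸ IsPrimitiveRoot.orderOf _
    have h7 := hbound (Nat.mul_pos hbpos hdpos) hwprim
    rw [Nat.totient_mul hbd_cop] at h7
    have h8 : b.totient ≤ 1 := by
      by_contra h9
      push_neg at h9
      nlinarith
    have h10 : b.totient = 1 := le_antisymm h8 (Nat.totient_pos.2 hbpos)
    exact Nat.totient_eq_one_iff.1 h10
  -- c ≤ k0 + 1
  have hcs : c ≤ k0 + 1 := by
    by_contra hcbig
    push_neg at hcbig
    have h1 := hbound (pow_pos hp.pos c) hzprim
    rw [hd_def, Nat.totient_prime_pow hp (by omega),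
      Nat.totient_prime_pow hp (by omega)] at h1
    simp only [Nat.add_sub_cancel] at h1
    have h2 : (p : ℕ) ^ k0 < (p : ℕ) ^ (c - 1) :=
      Nat.pow_lt_pow_right hp.one_lt (by omega)
    have h3 : 0 < (p : ℕ) - 1 := by
      have := hp.one_lt
      omega
    have h4 : (p : ℕ) ^ k0 * ((p : ℕ) - 1) < (p : ℕ) ^ (c - 1) * ((p : ℕ) - 1) :=
      Nat.mul_lt_mul_of_lt_of_le h2 le_rfl h3
    omega
  have hpcd : (p : ℕ) ^ c ∣ d := by
    rw [hd_def]
    exact pow_dvd_pow _ hcs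
  -- x ^ (2 * d) = 1
  have hk₀dvd : k₀ ∣ 2 * d := by
    rw [← hk₀eq]
    rcases hb2 with rfl | rfl
    · rw [mul_one]
      exact Dvd.dvd.mul_left hpcd 2
    · rw [mul_comm ((p : ℕ) ^ c) 2]
      exact mul_dvd_mul_left 2 hpcd
  have hx2d : x ^ (2 * d) = 1 := orderOf_dvd_iff_pow_eq_one.1 hk₀dvd
  have hxd : x ^ d = 1 ∨ x ^ d = -1 := by
    refine mul_self_eq_one_iff.1 ?_
    rw [← pow_add, ← two_mul]
    exact hx2d
  -- produce the sign and power
  have main : ∃ εK : K, (εK = 1 ∨ εK = -1) ∧ ∃ r : ℕ, x = εK * ζK ^ r := by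
    rcases hxd with h | h
    · obtain ⟨r, -, hr⟩ := hζKd.eq_pow_of_pow_eq_one h
      exact ⟨1, Or.inl rfl, r, by rw [one_mul, hr]⟩
    · have hdodd : Odd d := by
        rcases hp.eq_two_or_odd' with h2 | hodd
        · exfalso
          have hb1 : b = 1 := by
            rcases hb2 with h' | h'
            · exact h'
            · exfalso
              rw [h', h2] at hbco
              norm_num [Nat.Coprime] at hbco
          have hk₀d : k₀ ∣ d := by
            rw [← hk₀eq, hb1, mul_one]
            exact hpcd
          have hxd1 : x ^ d = 1 := orderOf_dvd_iff_pow_eq_one.1 hk₀d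
          rw [hxd1] at h
          exact (by norm_num : (1 : K) ≠ -1) h
        · rw [hd_def]
          exact hodd.pow
      obtain ⟨r, -, hr⟩ := hζKd.eq_pow_of_pow_eq_one
        (show (-x) ^ d = 1 by rw [hdodd.neg_pow, h, neg_neg])
      refine ⟨-1, Or.inr rfl, r, ?_⟩
      rw [hr]
      ring
  obtain ⟨εK, hεK, r, hxεr⟩ := main
  have hA0eq : A₀ = εK * ζK ^ r * A₁ := by
    rw [hx_def] at hxεr
    exact (div_eq_iff hA₁ne).1 hxεr
  constructor
  · refine ⟨f εK, ?_, r, ?_⟩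
    · rcases hεK with h | h
      · left; rw [h, map_one]
      · right; rw [h, map_neg, map_one]
    · have h9 := congrArg f hA0eq
      rw [map_mul, map_mul, map_pow, hfζ, hfA₀, hfA₁] at h9
      exact h9
  · refine ⟨k, hk, ?_⟩
    have h9 := congrArg f hxk
    rw [map_pow, map_one, hx_def, map_div₀, hfA₀, hfA₁] at h9
    exact h9

theorem key (p s : ℕ) (hp : p.Prime) [NeZero (p ^ s)] {ζ : ℂ}
    (hζ : IsPrimitiveRoot ζ (p ^ s)) (g₀ g₁ : ZMod (p ^ s) → ℕ)
    (h₀ : (∑ t : ZMod (p ^ s), ζ ^ g₀ t) *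
      (starRingEnd ℂ) (∑ t : ZMod (p ^ s), ζ ^ g₀ t) = ((p ^ s : ℕ) : ℂ))
    (h₁ : (∑ t : ZMod (p ^ s), ζ ^ g₁ t) *
      (starRingEnd ℂ) (∑ t : ZMod (p ^ s), ζ ^ g₁ t) = ((p ^ s : ℕ) : ℂ)) :
    (∃ ε : ℂ, (ε = 1 ∨ ε = -1) ∧ ∃ r : ℕ,
        (∑ t : ZMod (p ^ s), ζ ^ g₀ t) =
          ε * ζ ^ r * ∑ t : ZMod (p ^ s), ζ ^ g₁ t) ∧
      ∃ k : ℕ, 0 < k ∧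
        ((∑ t : ZMod (p ^ s), ζ ^ g₀ t) /
          ∑ t : ZMod (p ^ s), ζ ^ g₁ t) ^ k = 1 := by
  cases s with
  | zero =>
    have hζ1 : ζ = 1 := by
      have := hζ.pow_eq_one
      rwa [pow_zero, pow_one] at this
    have hsum : ∀ g : ZMod (p ^ 0) → ℕ, (∑ t : ZMod (p ^ 0), ζ ^ g t) = 1 := by
      intro g
      rw [Finset.sum_congr rfl fun t _ => by rw [hζ1, one_pow]]
      rw [Finset.sum_const, Finset.card_univ, ZMod.card, pow_zero, one_smul]
    refine ⟨⟨1, Or.inl rfl, 0, ?_⟩, 1, one_pos, ?_⟩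
    · rw [hsum g₀, hsum g₁, pow_zero]
      ring
    · rw [hsum g₀, hsum g₁]
      norm_num
  | succ k0 =>
    obtain ⟨P, hP⟩ : ∃ P : ℕ+, (P : ℕ) = p := ⟨⟨p, hp.pos⟩, rfl⟩
    subst hP
    haveI hfac : Fact (Nat.Prime (P : ℕ)) := ⟨hp⟩
    haveI : NeZero ((((P : ℕ) ^ (k0 + 1) : ℕ)) : ℚ) := ⟨by positivity⟩
    haveI : IsCyclotomicExtension {(P : ℕ) ^ (k0 + 1)} ℚ (CyclotomicField ((P : ℕ) ^ (k0 + 1)) ℚ) := by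
      convert CyclotomicField.isCyclotomicExtension ((P : ℕ) ^ (k0 + 1)) ℚ
      · rfl
      · exact Subsingleton.elim _ _
    exact key_main P k0 (CyclotomicField ((P : ℕ) ^ (k0 + 1)) ℚ)
      ((P : ℕ) ^ (k0 + 1)) rfl hζ g₀ g₁ h₀ h₁

def finZModEquiv (d : ℕ) [NeZero d] : Fin d ≃ ZMod d where
  toFun k := ((k : ℕ) : ZMod d)
  invFun t := ⟨t.val, t.val_lt⟩
  left_inv k := by
    ext
    simp [ZMod.val_cast_of_lt k.isLt]
  right_inv t := ZMod.natCast_rightInverse t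

lemma sum_fin_eq_sum_zmod {d : ℕ} [NeZero d] (F : ZMod d → ℂ) :
    ∑ k : Fin d, F ((k : ℕ) : ZMod d) = ∑ t : ZMod d, F t :=
  Fintype.sum_equiv (finZModEquiv d) _ _ (fun _ => rfl)

/-- `H` is a `q`-Butson Hadamard matrix: every entry is a `q`-th root of unity
and `H * Hᴴ = d • I`. -/
def IsButsonHadamard (q d : ℕ) (H : Matrix (Fin d) (Fin d) ℂ) : Prop :=
  (∀ i j, H i j ^ q = 1) ∧
    H * H.conjTranspose = (d : ℂ) • (1 : Matrix (Fin d) (Fin d) ℂ)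

/-- For a circulant `p^n`-Butson Hadamard matrix `H i j = a (i - j)` of
dimension `d = p^(m+n)` and a primitive `d`-th root of unity `ζ`, the
eigenvalues `α₀ = ∑ a j` and `α₁ = ∑ a j ζ^j` satisfy `α₀ = ε ζ^r α₁` for some
sign `ε` and `r ≥ 0`; in particular `α₀ / α₁` is a root of unity. -/
theorem circulant_butson_alpha_ratio (p n m : ℕ) (hp : p.Prime)
    (a : ZMod (p ^ (m + n)) → ℂ)
    (H : Matrix (Fin (p ^ (m + n))) (Fin (p ^ (m + n))) ℂ)
    (ha : ∀ i j, H i j = a (((i : ℕ) : ZMod (p ^ (m + n))) -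
      ((j : ℕ) : ZMod (p ^ (m + n)))))
    (hH : IsButsonHadamard (p ^ n) (p ^ (m + n)) H)
    (ζ : ℂ) (hζ : IsPrimitiveRoot ζ (p ^ (m + n))) :
    (∃ ε : ℂ, (ε = 1 ∨ ε = -1) ∧ ∃ r : ℕ,
        (∑ j ∈ Finset.range (p ^ (m + n)), a (j : ZMod (p ^ (m + n)))) =
          ε * ζ ^ r *
            ∑ j ∈ Finset.range (p ^ (m + n)), a (j : ZMod (p ^ (m + n))) * ζ ^ j) ∧
      ∃ k : ℕ, 0 < k ∧
        ((∑ j ∈ Finset.range (p ^ (m + n)), a (j : ZMod (p ^ (m + n)))) /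
            ∑ j ∈ Finset.range (p ^ (m + n)), a (j : ZMod (p ^ (m + n))) * ζ ^ j)
          ^ k = 1 := by
  haveI : NeZero (p ^ (m + n)) := ⟨pow_ne_zero _ hp.pos.ne'⟩
  have hdpos : 0 < p ^ (m + n) := Nat.pos_of_ne_zero (NeZero.ne _)
  obtain ⟨hent, hmat⟩ := hH
  -- every entry value is a `p^(m+n)`-th root of unity
  have hroot : ∀ t : ZMod (p ^ (m + n)), a t ^ (p ^ (m + n)) = 1 := by
    intro t
    have h1 : a t ^ (p ^ n) = 1 := by
      have h2 := hent ⟨t.val, t.val_lt⟩ ⟨0, hdpos⟩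
      rw [ha] at h2
      have h3 : ((((⟨t.val, t.val_lt⟩ : Fin (p ^ (m + n))) : ℕ) : ZMod (p ^ (m + n))) -
          (((⟨0, hdpos⟩ : Fin (p ^ (m + n))) : ℕ) : ZMod (p ^ (m + n)))) = t := by
        show ((t.val : ℕ) : ZMod (p ^ (m + n))) - ((0 : ℕ) : ZMod (p ^ (m + n))) = t
        rw [Nat.cast_zero, sub_zero]
        exact ZMod.natCast_rightInverse t
      rw [h3] at h2
      exact h2
    have h4 : p ^ (m + n) = p ^ n * p ^ m := by rw [← pow_add, add_comm]
    rw [h4, pow_mul, h1, one_pow]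
  -- exponents for the entries
  choose e hlt he using fun t => hζ.eq_pow_of_pow_eq_one (hroot t)
  -- autocorrelation from the Butson condition
  have hcorr : ∀ u : ZMod (p ^ (m + n)),
      (∑ t : ZMod (p ^ (m + n)), a (u + t) * (starRingEnd ℂ) (a t)) =
        if u = 0 then ((p ^ (m + n) : ℕ) : ℂ) else 0 := by
    intro u
    have h2 := congrFun (congrFun hmat ⟨u.val, u.val_lt⟩) ⟨0, hdpos⟩
    rw [Matrix.mul_apply] at h2
    simp only [Matrix.conjTranspose_apply, ha, Matrix.smul_apply, Matrix.one_apply,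
      ← starRingEnd_apply] at h2
    have hval : (((⟨u.val, u.val_lt⟩ : Fin (p ^ (m + n))) : ℕ) : ZMod (p ^ (m + n))) = u :=
      ZMod.natCast_rightInverse u
    have hzero : (((⟨0, hdpos⟩ : Fin (p ^ (m + n))) : ℕ) : ZMod (p ^ (m + n))) = 0 :=
      Nat.cast_zero
    rw [hval, hzero] at h2
    -- h2 : ∑ j : Fin d, a (u - ↑j) * conj (a (0 - ↑j)) = d • ite ..
    have h5 : ∑ j : Fin (p ^ (m + n)),
        a (u - ((j : ℕ) : ZMod (p ^ (m + n)))) *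
          (starRingEnd ℂ) (a (0 - ((j : ℕ) : ZMod (p ^ (m + n))))) =
        ∑ t : ZMod (p ^ (m + n)), a (u - t) * (starRingEnd ℂ) (a (0 - t)) :=
      sum_fin_eq_sum_zmod (fun t => a (u - t) * (starRingEnd ℂ) (a (0 - t)))
    rw [h5] at h2
    have h6 : ∑ t : ZMod (p ^ (m + n)), a (u - t) * (starRingEnd ℂ) (a (0 - t)) =
        ∑ t : ZMod (p ^ (m + n)), a (u + t) * (starRingEnd ℂ) (a t) := by
      rw [← Equiv.sum_comp (Equiv.neg (ZMod (p ^ (m + n))))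
        (fun t => a (u - t) * (starRingEnd ℂ) (a (0 - t)))]
      refine Finset.sum_congr rfl fun t _ => ?_
      simp only [Equiv.neg_apply]
      rw [sub_neg_eq_add, zero_sub, neg_neg]
    rw [h6] at h2
    rw [h2]
    have h7 : ((⟨u.val, u.val_lt⟩ : Fin (p ^ (m + n))) = ⟨0, hdpos⟩) ↔ u = 0 := by
      rw [Fin.mk_eq_mk, ← ZMod.val_eq_zero]
    by_cases hu : u = 0
    · rw [if_pos (h7.2 hu), if_pos hu, smul_eq_mul, mul_one]
    · rw [if_neg (fun h => hu (h7.1 h)), if_neg hu, smul_eq_mul, mul_zero]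
  -- the two weighted sums have |·|² = d
  have h₀' := corr_sum a (fun _ => 1) hcorr rfl (fun u v => (one_mul 1).symm)
    (fun u => by rw [map_one, mul_one])
  simp only [mul_one] at h₀'
  have hχadd : ∀ u v : ZMod (p ^ (m + n)),
      ζ ^ (u + v).val = ζ ^ u.val * ζ ^ v.val := by
    intro u v
    rw [ZMod.val_add, pow_mod_eq' hζ.pow_eq_one, pow_add]
  have hχ1 : ∀ u : ZMod (p ^ (m + n)), ζ ^ u.val * (starRingEnd ℂ) (ζ ^ u.val) = 1 := by
    intro u
    have hz : ‖ζ ^ u.val‖ = 1 := by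
      rw [norm_pow, Complex.norm_eq_one_of_pow_eq_one hζ.pow_eq_one hdpos.ne', one_pow]
    rw [Complex.mul_conj, Complex.normSq_eq_norm_sq, hz]
    norm_num
  have h₁' := corr_sum a (fun t => ζ ^ t.val) hcorr
    (by simp) hχadd hχ1
  beta_reduce at h₁'
  -- rewrite `a` in terms of powers of ζ
  have hA₀form : (∑ t : ZMod (p ^ (m + n)), a t) = ∑ t : ZMod (p ^ (m + n)), ζ ^ e t :=
    Finset.sum_congr rfl fun t _ => (he t).symm
  have hA₁form : (∑ t : ZMod (p ^ (m + n)), a t * ζ ^ t.val) =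
      ∑ t : ZMod (p ^ (m + n)), ζ ^ (e t + t.val) :=
    Finset.sum_congr rfl fun t _ => by rw [← he t]; exact (pow_add ζ (e t) t.val).symm
  -- range sums to ZMod sums
  have hrange₀ : (∑ j ∈ Finset.range (p ^ (m + n)), a (j : ZMod (p ^ (m + n)))) =
      ∑ t : ZMod (p ^ (m + n)), a t := by
    rw [← Fin.sum_univ_eq_sum_range (fun j => a ((j : ℕ) : ZMod (p ^ (m + n)))) (p ^ (m + n))]
    exact sum_fin_eq_sum_zmod (fun t => a t)
  have hrange₁ : (∑ j ∈ Finset.range (p ^ (m + n)), a (j : ZMod (p ^ (m + n))) * ζ ^ j) =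
      ∑ t : ZMod (p ^ (m + n)), a t * ζ ^ t.val := by
    rw [← Fin.sum_univ_eq_sum_range
      (fun j => a ((j : ℕ) : ZMod (p ^ (m + n))) * ζ ^ j) (p ^ (m + n))]
    rw [← sum_fin_eq_sum_zmod (fun t => a t * ζ ^ t.val)]
    exact Finset.sum_congr rfl fun k _ => by rw [ZMod.val_cast_of_lt k.isLt]
  obtain ⟨⟨ε, hε, r, hr⟩, k, hk, hk1⟩ := key p (m + n) hp hζ e (fun t => e t + t.val)
    (by rw [← hA₀form]; exact h₀') (by rw [← hA₁form]; exact h₁')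
  constructor
  · exact ⟨ε, hε, r, by rw [hrange₀, hA₀form, hrange₁, hA₁form, hr]⟩
  · exact ⟨k, hk, by rw [hrange₀, hA₀form, hrange₁, hA₁form]; exact hk1⟩
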